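/- Let n ≥ 3 be an integer, p ≥ 1, and λ > 0. With f, G, V_p as defined below, G is a strictly decreasing bijection from (0,1) onto (0,∞); let G⁻¹ : (0,∞) → (0,1) denote its inverse. For a measurable function u : (0,1) → ℝ define its hyperbolic rescaling u_λ(r) = λ^{−1/2} u(G⁻¹(λ G(r))). Then the Lebesgue integrals (with values in [0,∞]) satisfy ∫₀¹ V_p(r) |u_λ(r)|^p (2/(1−r²))ⁿ r^{n−1} dr = ∫₀¹ V_p(r) |u(r)|^p (2/(1−r²))ⁿ r^{n−1} dr. (This is the invariance ∫_{𝔹ⁿ} V_p|u_λ|^p dv_{g_{𝔹ⁿ}} = ∫_{𝔹ⁿ} V_p|u|^p dv_{g_{𝔹ⁿ}} for radial functions on the Poincaré ball, written in polar coordinates up to the constant factor n·ω_{n−1}.) -/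

import Mathlib

open Real Filter Set MeasureTheory

/-- `f n r = (1 - r²)^(n-2) / r^(n-1)`. -/
noncomputable def f (n : ℕ) (r : ℝ) : ℝ := (1 - r ^ 2) ^ (n - 2) / r ^ (n - 1)

/-- `G n r = ∫_r^1 f n t dt`. -/
noncomputable def G (n : ℕ) (r : ℝ) : ℝ := ∫ t in r..(1 : ℝ), f n t

/-- `V n p r = f(r)²(1-r²)² / (4(n-2)² G(r)^((p+2)/2))`. -/
noncomputable def V (n : ℕ) (p r : ℝ) : ℝ :=
  f n r ^ 2 * (1 - r ^ 2) ^ 2 / (4 * ((n : ℝ) - 2) ^ 2 * G n r ^ ((p + 2) / 2))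

lemma f_nonneg (n : ℕ) {r : ℝ} (h0 : 0 ≤ r) (h1 : r ≤ 1) : 0 ≤ f n r := by
  have : (0:ℝ) ≤ 1 - r ^ 2 := by nlinarith
  exact div_nonneg (pow_nonneg this _) (pow_nonneg h0 _)

lemma f_pos (n : ℕ) {r : ℝ} (h0 : 0 < r) (h1 : r < 1) : 0 < f n r := by
  have : (0:ℝ) < 1 - r ^ 2 := by nlinarith
  exact div_pos (pow_pos this _) (pow_pos h0 _)

lemma f_contAt (n : ℕ) {r : ℝ} (h0 : r ≠ 0) : ContinuousAt (f n) r := by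
  exact ContinuousAt.div (by fun_prop) (by fun_prop) (pow_ne_zero _ h0)

lemma f_meas (n : ℕ) : Measurable (f n) :=
  Measurable.div (by fun_prop) (by fun_prop)

lemma f_intble (n : ℕ) {a b : ℝ} (ha : 0 < a) (hab : a ≤ b) :
    IntervalIntegrable (f n) volume a b := by
  apply ContinuousOn.intervalIntegrable
  intro x hx
  rw [uIcc_of_le hab] at hx
  exact (f_contAt n (by linarith [hx.1] : x ≠ 0)).continuousWithinAt

lemma G_hasDeriv (n : ℕ) {r : ℝ} (h0 : 0 < r) (h1 : r < 1) :
    HasDerivAt (G n) (-(f n r)) r := by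
  exact intervalIntegral.integral_hasDerivAt_left (f_intble n h0 h1.le)
    ⟨Set.univ, Filter.univ_mem, ((f_meas n).aestronglyMeasurable)⟩ (f_contAt n h0.ne')

lemma G_pos (n : ℕ) {r : ℝ} (h0 : 0 < r) (h1 : r < 1) : 0 < G n r :=
  intervalIntegral.intervalIntegral_pos_of_pos_on (f_intble n h0 h1.le)
    (fun x hx => f_pos n (h0.trans hx.1) hx.2) h1

lemma G_contOn (n : ℕ) : ContinuousOn (G n) (Set.Ioo 0 1) :=
  fun x hx => ((G_hasDeriv n hx.1 hx.2).continuousAt).continuousWithinAt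

lemma G_anti (n : ℕ) : StrictAntiOn (G n) (Set.Ioo 0 1) := by
  apply strictAntiOn_of_deriv_neg (convex_Ioo 0 1) (G_contOn n)
  intro x hx
  rw [interior_Ioo] at hx
  rw [(G_hasDeriv n hx.1 hx.2).deriv]
  exact neg_neg_of_pos (f_pos n hx.1 hx.2)

lemma G_exists_small (n : ℕ) {y : ℝ} (hy : 0 < y) : ∃ b ∈ Set.Ioo (0:ℝ) 1, G n b < y := by
  obtain ⟨C, hC⟩ := (isCompact_Icc (a := (1:ℝ)/2) (b := 1)).exists_bound_of_continuousOn
    (fun x hx => (f_contAt n (by linarith [hx.1] : x ≠ 0)).continuousWithinAt)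
  set C' : ℝ := max C 0 + 1 with hC'def
  have hC'pos : 0 < C' := by positivity
  set b : ℝ := max (1/2) (1 - y / (2 * C')) with hbdef
  have hb0 : (0:ℝ) < b := lt_of_lt_of_le (by norm_num) (le_max_left _ _)
  have hb1 : b < 1 := by
    apply max_lt (by norm_num)
    have : 0 < y / (2 * C') := by positivity
    linarith
  refine ⟨b, ⟨hb0, hb1⟩, ?_⟩
  have hfb : ∀ x ∈ Set.Icc b 1, f n x ≤ C' := by
    intro x hx
    have hx2 : x ∈ Set.Icc (1/2 : ℝ) 1 := ⟨le_trans (le_max_left _ _) hx.1, hx.2⟩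
    calc f n x ≤ ‖f n x‖ := le_abs_self _
    _ ≤ C := hC x hx2
    _ ≤ C' := by simp [hC'def]; linarith [le_max_left C 0]
  have h1 : G n b ≤ ∫ t in b..(1:ℝ), C' := by
    apply intervalIntegral.integral_mono_on hb1.le (f_intble n hb0 hb1.le)
      intervalIntegrable_const hfb
  have h2 : ∫ t in b..(1:ℝ), C' = (1 - b) * C' := by
    rw [intervalIntegral.integral_const, smul_eq_mul]
  have h3 : 1 - b ≤ y / (2 * C') := by
    have := le_max_right (1/2 : ℝ) (1 - y / (2 * C'))
    linarith
  calc G n b ≤ (1 - b) * C' := by rw [← h2]; exact h1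
  _ ≤ (y / (2 * C')) * C' := by
      apply mul_le_mul_of_nonneg_right h3 hC'pos.le
  _ = y / 2 := by field_simp
  _ < y := by linarith

lemma G_exists_large (n : ℕ) (hn : 3 ≤ n) (y : ℝ) : ∃ a ∈ Set.Ioo (0:ℝ) 1, y < G n a := by
  set c : ℝ := ((3:ℝ)/4) ^ (n - 2) with hcdef
  have hc : 0 < c := by positivity
  set a : ℝ := (1/2) * Real.exp (-(max y 0 + 1) / c) with hadef
  have ha0 : 0 < a := by positivity
  have hah : a < 1/2 := by
    have : Real.exp (-(max y 0 + 1) / c) < 1 := by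
      rw [Real.exp_lt_one_iff]
      have : 0 < max y 0 + 1 := by positivity
      exact div_neg_of_neg_of_pos (by linarith) hc
    calc a = (1/2) * Real.exp (-(max y 0 + 1) / c) := rfl
    _ < (1/2) * 1 := by linarith
    _ = 1/2 := by ring
  refine ⟨a, ⟨ha0, by linarith⟩, ?_⟩
  -- lower bound f by c / t on [a, 1/2]
  have hbound : ∀ t ∈ Set.Icc a (1/2 : ℝ), c / t ≤ f n t := by
    intro t ht
    have ht0 : 0 < t := lt_of_lt_of_le ha0 ht.1
    have ht1 : t ≤ 1/2 := ht.2
    have hnum : c ≤ (1 - t ^ 2) ^ (n - 2) := by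
      apply pow_le_pow_left₀ (by norm_num)
      nlinarith
    have hden : t ^ (n - 1) ≤ t := by
      apply pow_le_of_le_one ht0.le (by linarith) (by omega)
    have hdenpos : 0 < t ^ (n - 1) := pow_pos ht0 _
    calc c / t ≤ c / t ^ (n - 1) := by
          apply div_le_div_of_nonneg_left hc.le hdenpos hden
    _ ≤ (1 - t ^ 2) ^ (n - 2) / t ^ (n - 1) := by
          exact (div_le_div_iff_of_pos_right hdenpos).mpr hnum
    _ = f n t := rfl
  have hint1 : IntervalIntegrable (f n) volume a (1/2) := f_intble n ha0 hah.le
  have hint2 : IntervalIntegrable (f n) volume (1/2) 1 := f_intble n (by norm_num) (by norm_num)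
  have hsplit : (∫ t in a..(1/2:ℝ), f n t) + ∫ t in (1/2:ℝ)..1, f n t = G n a :=
    intervalIntegral.integral_add_adjacent_intervals hint1 hint2
  have hpart2 : 0 ≤ ∫ t in (1/2:ℝ)..1, f n t :=
    intervalIntegral.integral_nonneg (by norm_num)
      (fun x hx => f_nonneg n (by linarith [hx.1]) hx.2)
  have hctint : IntervalIntegrable (fun t => c / t) volume a (1/2) := by
    apply ContinuousOn.intervalIntegrable
    intro x hx
    rw [Set.uIcc_of_le hah.le] at hx
    exact (ContinuousAt.div continuousAt_const continuousAt_id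
      (by linarith [hx.1] : x ≠ 0)).continuousWithinAt
  have hlogint : ∫ t in a..(1/2:ℝ), c / t = c * Real.log ((1/2)/a) := by
    have h0 : (0:ℝ) ∉ Set.uIcc a (1/2) := by
      rw [Set.uIcc_of_le hah.le]
      rintro ⟨h1, -⟩
      linarith
    calc ∫ t in a..(1/2:ℝ), c / t = ∫ t in a..(1/2:ℝ), c * (1/t) := by simp_rw [mul_one_div]
    _ = c * ∫ t in a..(1/2:ℝ), 1/t := intervalIntegral.integral_const_mul _ _
    _ = c * Real.log ((1/2)/a) := by rw [integral_one_div h0]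
  have hexp : (1/2:ℝ)/a = Real.exp ((max y 0 + 1)/c) := by
    rw [hadef]
    rw [div_mul_eq_div_div, div_self (by norm_num : (1/2:ℝ) ≠ 0), one_div, ← Real.exp_neg, neg_div, neg_neg]
  have hval : c * Real.log ((1/2)/a) = max y 0 + 1 := by
    rw [hexp, Real.log_exp, mul_div_cancel₀ _ hc.ne']
  have hpart1 : max y 0 + 1 ≤ ∫ t in a..(1/2:ℝ), f n t := by
    rw [← hval, ← hlogint]
    exact intervalIntegral.integral_mono_on hah.le hctint hint1 hbound
  have : y ≤ max y 0 := le_max_left _ _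
  linarith

lemma G_bijOn (n : ℕ) (hn : 3 ≤ n) : Set.BijOn (G n) (Set.Ioo 0 1) (Set.Ioi 0) := by
  refine ⟨fun r hr => G_pos n hr.1 hr.2, (G_anti n).injOn, ?_⟩
  intro y hy
  obtain ⟨b, hb, hby⟩ := G_exists_small n hy
  obtain ⟨a, ha, hya⟩ := G_exists_large n hn y
  have hab : a < b := by
    rcases lt_trichotomy a b with h | h | h
    · exact h
    · exact absurd (h ▸ hya) (by linarith)
    · exact absurd (G_anti n hb ha h) (by linarith)
  have hsub : Set.Icc a b ⊆ Set.Ioo 0 1 := fun x hx => ⟨lt_of_lt_of_le ha.1 hx.1,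
    lt_of_le_of_lt hx.2 hb.2⟩
  have := intermediate_value_Ioo' hab.le ((G_contOn n).mono hsub)
  obtain ⟨x, hx, hxy⟩ := this ⟨hby, hya⟩
  exact ⟨x, hsub ⟨hx.1.le, hx.2.le⟩ |>.1 |> fun h => ⟨⟨h, (hsub ⟨hx.1.le, hx.2.le⟩).2⟩, hxy⟩⟩

lemma lintegral_cov {s : Set ℝ} {F F' : ℝ → ℝ} (hs : MeasurableSet s)
    (hF' : ∀ x ∈ s, HasDerivWithinAt F (F' x) s x) (hF : Set.InjOn F s) (g : ℝ → ENNReal) :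
    ∫⁻ x in F '' s, g x = ∫⁻ x in s, ENNReal.ofReal |F' x| * g (F x) := by
  simpa only [ContinuousLinearMap.det_toSpanSingleton] using
    lintegral_image_eq_lintegral_abs_det_fderiv_mul volume hs
      (fun x hx => (hF' x hx).hasFDerivWithinAt) hF g

lemma algebra_id (n : ℕ) (hn : 3 ≤ n) (p : ℝ) {r : ℝ} (h0 : 0 < r) (h1 : r < 1) (B : ℝ) :
    V n p r * B * (2 / (1 - r ^ 2)) ^ n * r ^ (n - 1)
      = f n r * ((2:ℝ) ^ n / (4 * ((n : ℝ) - 2) ^ 2) * (G n r ^ ((p + 2) / 2))⁻¹ * B) := by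
  obtain ⟨k, rfl⟩ : ∃ k, n = k + 3 := ⟨n - 3, by omega⟩
  have hq : (0:ℝ) < 1 - r ^ 2 := by nlinarith
  have hG : 0 < G (k + 3) r := G_pos _ h0 h1
  have hGe : 0 < G (k + 3) r ^ ((p + 2) / 2) := Real.rpow_pos_of_pos hG _
  have hcast : ((k + 3 : ℕ) : ℝ) - 2 ≠ 0 := by
    push_cast
    have : (0:ℝ) ≤ k := Nat.cast_nonneg k
    linarith
  have key : ∀ a b g N B q : ℝ, a ≠ 0 → b ≠ 0 → g ≠ 0 → N ≠ 0 → q ≠ 0 →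
      (a / b) ^ 2 * q ^ 2 / (4 * N ^ 2 * g) * B * (2 ^ (k+3) / (a * q ^ 2)) * b
        = a / b * ((2:ℝ) ^ (k+3) / (4 * N ^ 2) * g⁻¹ * B) := by
    intro a b g N B q ha hb hg hN hq
    field_simp
  unfold V f
  simp only [show k + 3 - 2 = k + 1 from rfl, show k + 3 - 1 = k + 2 from rfl]
  have e1 : (2 / (1 - r ^ 2)) ^ (k + 3) = 2 ^ (k+3) / ((1 - r^2) ^ (k+1) * (1 - r^2) ^ 2) := by
    rw [div_pow, ← pow_add]
  rw [e1]
  exact key ((1 - r^2)^(k+1)) (r^(k+2)) (G (k+3) r ^ ((p+2)/2)) (((k+3:ℕ):ℝ) - 2) B (1 - r^2)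
    (pow_ne_zero _ hq.ne') (pow_ne_zero _ h0.ne') hGe.ne' hcast hq.ne'

theorem main_int (n : ℕ) (hn : 3 ≤ n) (p : ℝ) (hp : 1 ≤ p) (lam : ℝ) (hlam : 0 < lam)
    (Ginv : ℝ → ℝ) (hinv : Set.InvOn Ginv (G n) (Set.Ioo 0 1) (Set.Ioi 0))
    (u : ℝ → ℝ) (hu : Measurable u) :
    ∫⁻ r in Set.Ioo (0 : ℝ) 1,
        ENNReal.ofReal (V n p r * |lam ^ (-(1 : ℝ) / 2) * u (Ginv (lam * G n r))| ^ p *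
          (2 / (1 - r ^ 2)) ^ n * r ^ (n - 1)) =
    ∫⁻ r in Set.Ioo (0 : ℝ) 1,
        ENNReal.ofReal (V n p r * |u r| ^ p * (2 / (1 - r ^ 2)) ^ n * r ^ (n - 1)) := by
  set c : ℝ := (2:ℝ) ^ n / (4 * ((n : ℝ) - 2) ^ 2) with hc
  set e : ℝ := (p + 2) / 2 with he
  set W : ℝ → ℝ := fun g => c * (g ^ e)⁻¹ * |u (Ginv g)| ^ p with hW
  set Wl : ℝ → ℝ := fun g => c * (g ^ e)⁻¹ *
    |lam ^ (-(1 : ℝ) / 2) * u (Ginv (lam * g))| ^ p with hWl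
  have himg : G n '' Set.Ioo 0 1 = Set.Ioi 0 := (G_bijOn n hn).image_eq
  have hGd : ∀ r ∈ Set.Ioo (0:ℝ) 1, HasDerivWithinAt (G n) (-(f n r)) (Set.Ioo 0 1) r :=
    fun r hr => (G_hasDeriv n hr.1 hr.2).hasDerivWithinAt
  have stepC : ∀ w : ℝ → ℝ,
      ∫⁻ r in Set.Ioo (0:ℝ) 1, ENNReal.ofReal (f n r * w (G n r)) =
        ∫⁻ g in Set.Ioi (0:ℝ), ENNReal.ofReal (w g) := by
    intro w
    rw [← himg, lintegral_cov measurableSet_Ioo hGd (G_anti n).injOn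
      (fun g => ENNReal.ofReal (w g))]
    apply setLIntegral_congr_fun measurableSet_Ioo
    intro r hr
    beta_reduce
    rw [abs_neg, abs_of_pos (f_pos n hr.1 hr.2), ← ENNReal.ofReal_mul (f_pos n hr.1 hr.2).le]
  have stepA : ∫⁻ r in Set.Ioo (0 : ℝ) 1,
      ENNReal.ofReal (V n p r * |lam ^ (-(1 : ℝ) / 2) * u (Ginv (lam * G n r))| ^ p *
        (2 / (1 - r ^ 2)) ^ n * r ^ (n - 1)) =
      ∫⁻ r in Set.Ioo (0:ℝ) 1, ENNReal.ofReal (f n r * Wl (G n r)) := by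
    apply setLIntegral_congr_fun measurableSet_Ioo
    intro r hr
    beta_reduce
    congr 1
    rw [algebra_id n hn p hr.1 hr.2]
  have stepB : ∫⁻ r in Set.Ioo (0 : ℝ) 1,
      ENNReal.ofReal (V n p r * |u r| ^ p * (2 / (1 - r ^ 2)) ^ n * r ^ (n - 1)) =
      ∫⁻ r in Set.Ioo (0:ℝ) 1, ENNReal.ofReal (f n r * W (G n r)) := by
    apply setLIntegral_congr_fun measurableSet_Ioo
    intro r hr
    beta_reduce
    congr 1
    rw [algebra_id n hn p hr.1 hr.2]
    rw [hW]
    simp only []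
    rw [hinv.1 hr]
  have stepD : ∫⁻ g in Set.Ioi (0:ℝ), ENNReal.ofReal (W g) =
      ∫⁻ g in Set.Ioi (0:ℝ), ENNReal.ofReal (Wl g) := by
    have himg2 : (fun t => lam * t) '' Set.Ioi (0:ℝ) = Set.Ioi 0 := by
      ext x
      simp only [Set.mem_image, Set.mem_Ioi]
      constructor
      · rintro ⟨t, ht, rfl⟩; positivity
      · intro hx
        exact ⟨x / lam, div_pos hx hlam, by field_simp⟩
    have hTd : ∀ t ∈ Set.Ioi (0:ℝ), HasDerivWithinAt (fun t => lam * t) lam (Set.Ioi 0) t :=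
      fun t _ => by simpa using ((hasDerivAt_id t).const_mul lam).hasDerivWithinAt
    have hTinj : Set.InjOn (fun t => lam * t) (Set.Ioi 0) :=
      fun x _ y _ h => mul_left_cancel₀ hlam.ne' h
    conv_lhs => rw [← himg2]
    rw [lintegral_cov measurableSet_Ioi hTd hTinj (fun g => ENNReal.ofReal (W g))]
    apply setLIntegral_congr_fun measurableSet_Ioi
    intro t ht
    beta_reduce
    rw [abs_of_pos hlam, ← ENNReal.ofReal_mul hlam.le]
    congr 1
    have ht0 : (0:ℝ) < t := ht
    have h1 : ((lam * t) ^ e)⁻¹ = (lam ^ e)⁻¹ * (t ^ e)⁻¹ := by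
      rw [Real.mul_rpow hlam.le ht0.le, mul_inv]
    have h2 : |lam ^ (-(1:ℝ) / 2) * u (Ginv (lam * t))| ^ p
        = lam ^ ((-(1:ℝ) / 2) * p) * |u (Ginv (lam * t))| ^ p := by
      rw [abs_mul, abs_of_pos (Real.rpow_pos_of_pos hlam _),
        Real.mul_rpow (Real.rpow_nonneg hlam.le _) (abs_nonneg _),
        ← Real.rpow_mul hlam.le]
    have h3 : lam * (lam ^ e)⁻¹ = lam ^ ((-(1:ℝ) / 2) * p) := by
      nth_rewrite 1 [← Real.rpow_one lam]
      rw [← Real.rpow_neg hlam.le, ← Real.rpow_add hlam]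
      congr 1
      rw [he]; ring
    rw [hW, hWl]
    simp only []
    rw [h1, h2, ← h3]
    ring
  rw [stepA, stepB, stepC, stepC, stepD]

/-- `G` is a strictly decreasing bijection from `(0,1)` onto `(0,∞)`, and for any
inverse `G⁻¹` of it, any `λ > 0`, `p ≥ 1` and any measurable `u`, the hyperbolic rescaling
`u_λ(r) = λ^{-1/2} u(G⁻¹(λ G(r)))` satisfies
`∫₀¹ V_p |u_λ|^p (2/(1-r²))ⁿ r^{n-1} dr = ∫₀¹ V_p |u|^p (2/(1-r²))ⁿ r^{n-1} dr`
(as Lebesgue integrals with values in `[0,∞]`). -/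
theorem stmt_4 (n : ℕ) (hn : 3 ≤ n) (p : ℝ) (hp : 1 ≤ p) (lam : ℝ) (hlam : 0 < lam) :
    StrictAntiOn (G n) (Set.Ioo 0 1) ∧ Set.BijOn (G n) (Set.Ioo 0 1) (Set.Ioi 0) ∧
    ∀ Ginv : ℝ → ℝ, Set.InvOn Ginv (G n) (Set.Ioo 0 1) (Set.Ioi 0) →
      ∀ u : ℝ → ℝ, Measurable u →
        ∫⁻ r in Set.Ioo (0 : ℝ) 1,
            ENNReal.ofReal (V n p r * |lam ^ (-(1 : ℝ) / 2) * u (Ginv (lam * G n r))| ^ p *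
              (2 / (1 - r ^ 2)) ^ n * r ^ (n - 1)) =
        ∫⁻ r in Set.Ioo (0 : ℝ) 1,
            ENNReal.ofReal (V n p r * |u r| ^ p * (2 / (1 - r ^ 2)) ^ n * r ^ (n - 1)) := by
  refine ⟨G_anti n, G_bijOn n hn, ?_⟩
  intro Ginv hinv u hu
  exact main_int n hn p hp lam hlam Ginv hinv u hu
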